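/- The family I_f := {S ⊆ ℕ : S ∩ 2ℕ is finite} is an ideal on ℕ which is not weakly thinnable: the set A := ℕ \ {1} has asymptotic density 1, the set B := 2ℕ of even numbers satisfies B ∉ I_f, and yet A_B = 2ℕ + 1 (the odd numbers greater than 1) belongs to I_f. -/

import Mathlib

open Filter Topology MeasureTheory Set

/-- The canonical (increasing) enumeration of a set of natural numbers. -/
noncomputable def enumOf (A : Set ℕ) : ℕ → ℕ := Nat.nth (· ∈ A)

/-- `idxSet A B` is the set `A_B = {a_b : b ∈ B}`, where `{a_n}` is the canonical
enumeration of `A`. -/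
noncomputable def idxSet (A B : Set ℕ) : Set ℕ := enumOf A '' B

/-- `seqLE X Y` means `X ≤ Y`, i.e. `x_n ≤ y_n` for all `n`, for the canonical
enumerations `{x_n}` of `X` and `{y_n}` of `Y`. -/
def seqLE (X Y : Set ℕ) : Prop := ∀ n, enumOf X n ≤ enumOf Y n

/-- `A` has asymptotic density `c`: `|A ∩ [1,n]| / n → c`. -/
def HasDensity (A : Set ℕ) (c : ℝ) : Prop :=
  Tendsto (fun n : ℕ => ((A ∩ Set.Icc 1 n).ncard : ℝ) / n) atTop (𝓝 c)

/-- An ideal on ℕ: closed under finite unions and subsets, contains all finite sets,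
and is not the whole power set. -/
def IsIdeal (I : Set (Set ℕ)) : Prop :=
  (∀ A B : Set ℕ, A ∈ I → B ∈ I → A ∪ B ∈ I) ∧
  (∀ A B : Set ℕ, A ⊆ B → B ∈ I → A ∈ I) ∧
  (∀ A : Set ℕ, A.Finite → A ∈ I) ∧
  Set.univ ∉ I

/-- `I` is weakly thinnable: `A_B ∉ I` whenever `A` admits non-zero asymptotic density
and `B ∉ I`. -/
def WeaklyThinnable (I : Set (Set ℕ)) : Prop :=
  ∀ A B : Set ℕ, (∃ c : ℝ, c ≠ 0 ∧ HasDensity A c) → B ∉ I → idxSet A B ∉ I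

/-- `I` is thinnable: weakly thinnable, `B_A ∉ I` whenever `A` admits non-zero asymptotic
density and `B ∉ I`, and `X ∉ I` whenever `X ≤ Y` and `Y ∉ I`. -/
def Thinnable (I : Set (Set ℕ)) : Prop :=
  WeaklyThinnable I ∧
  (∀ A B : Set ℕ, (∃ c : ℝ, c ≠ 0 ∧ HasDensity A c) → B ∉ I → idxSet B A ∉ I) ∧
  (∀ X Y : Set ℕ, X.Infinite → Y.Infinite → seqLE X Y → Y ∉ I → X ∉ I)

/-- `I` is strechable: `kA ∉ I` for all (positive) `k` and all `A ∉ I`. -/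
def Strechable (I : Set (Set ℕ)) : Prop :=
  ∀ k : ℕ, 0 < k → ∀ A : Set ℕ, A ∉ I → (fun a => k * a) '' A ∉ I

lemma cnt15 : ∀ n, Nat.count (fun m : ℕ => m ≠ 1) (n + 2) = n + 1 := by
  intro n
  induction n with
  | zero => decide
  | succ k ih => rw [show k + 1 + 2 = (k + 2) + 1 by ring, Nat.count_succ, ih]; simp

lemma nth15 : ∀ m : ℕ, 1 ≤ m → Nat.nth (fun m : ℕ => m ≠ 1) m = m + 1 := by
  intro m hm
  have h := Nat.nth_count (p := fun m : ℕ => m ≠ 1) (n := m + 1) (by omega)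
  have hc : Nat.count (fun m : ℕ => m ≠ 1) (m + 1) = m := by
    obtain ⟨k, rfl⟩ : ∃ k, m = k + 1 := ⟨m - 1, by omega⟩
    simpa using cnt15 k
  rwa [hc] at h

lemma enum15 : ∀ m : ℕ, 1 ≤ m → enumOf {n : ℕ | n ≠ 1} m = m + 1 := nth15

lemma idx15 : idxSet {n : ℕ | n ≠ 1} {n : ℕ | 0 < n ∧ 2 ∣ n} = {n : ℕ | 1 < n ∧ ¬ 2 ∣ n} := by
  ext n
  simp only [idxSet, Set.mem_image, Set.mem_setOf_eq]
  constructor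
  · rintro ⟨b, ⟨hb, hb2⟩, rfl⟩
    rw [enum15 b hb]
    omega
  · rintro ⟨hn, hn2⟩
    refine ⟨n - 1, ⟨by omega, by omega⟩, ?_⟩
    rw [enum15 (n - 1) (by omega)]
    omega

lemma evens_inf : {n : ℕ | 0 < n ∧ 2 ∣ n}.Infinite := by
  apply Set.infinite_of_injective_forall_mem (f := fun k : ℕ => 2 * (k + 1))
  · intro a b h; simp only at h; omega
  · intro k; exact ⟨by omega, ⟨k + 1, rfl⟩⟩

theorem stmt15 :
    IsIdeal {S : Set ℕ | (S ∩ {n : ℕ | 0 < n ∧ 2 ∣ n}).Finite} ∧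
    ¬ WeaklyThinnable {S : Set ℕ | (S ∩ {n : ℕ | 0 < n ∧ 2 ∣ n}).Finite} ∧
    HasDensity {n : ℕ | n ≠ 1} 1 ∧
    {n : ℕ | 0 < n ∧ 2 ∣ n} ∉ {S : Set ℕ | (S ∩ {n : ℕ | 0 < n ∧ 2 ∣ n}).Finite} ∧
    idxSet {n : ℕ | n ≠ 1} {n : ℕ | 0 < n ∧ 2 ∣ n} = {n : ℕ | 1 < n ∧ ¬ 2 ∣ n} ∧
    idxSet {n : ℕ | n ≠ 1} {n : ℕ | 0 < n ∧ 2 ∣ n} ∈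
      {S : Set ℕ | (S ∩ {n : ℕ | 0 < n ∧ 2 ∣ n}).Finite} := by
  have hBnotI : {n : ℕ | 0 < n ∧ 2 ∣ n} ∉ {S : Set ℕ | (S ∩ {n : ℕ | 0 < n ∧ 2 ∣ n}).Finite} := by
    intro h
    simp only [Set.mem_setOf_eq, Set.inter_self] at h
    exact evens_inf h
  have hmem : idxSet {n : ℕ | n ≠ 1} {n : ℕ | 0 < n ∧ 2 ∣ n} ∈
      {S : Set ℕ | (S ∩ {n : ℕ | 0 < n ∧ 2 ∣ n}).Finite} := by
    simp only [Set.mem_setOf_eq]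
    rw [idx15]
    have : {n : ℕ | 1 < n ∧ ¬ 2 ∣ n} ∩ {n : ℕ | 0 < n ∧ 2 ∣ n} = ∅ := by
      ext n; simp only [Set.mem_inter_iff, Set.mem_setOf_eq, Set.mem_empty_iff_false]; tauto
    rw [this]; exact Set.finite_empty
  have hdens : HasDensity {n : ℕ | n ≠ 1} 1 := by
    unfold HasDensity
    have heq : ∀ᶠ n : ℕ in atTop,
        (({n : ℕ | n ≠ 1} ∩ Set.Icc 1 n).ncard : ℝ) / n = 1 - 1 / n := by
      filter_upwards [eventually_ge_atTop 1] with n hn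
      have hset : {m : ℕ | m ≠ 1} ∩ Set.Icc 1 n = Set.Icc 2 n := by
        ext m
        simp only [Set.mem_inter_iff, Set.mem_setOf_eq, Set.mem_Icc]
        omega
      have hcard : ({m : ℕ | m ≠ 1} ∩ Set.Icc 1 n).ncard = n - 1 := by
        rw [hset, Set.ncard_eq_toFinset_card']
        simp
      rw [hcard]
      have hn0 : (n : ℝ) ≠ 0 := by positivity
      rw [Nat.cast_sub hn, Nat.cast_one, sub_div, div_self hn0, one_div]
    refine Tendsto.congr' (heq.mono fun n h => h.symm) ?_
    have : Tendsto (fun n : ℕ => 1 / (n : ℝ)) atTop (𝓝 0) := tendsto_one_div_atTop_nhds_zero_nat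
    simpa using tendsto_const_nhds.sub this
  refine ⟨⟨?_, ?_, ?_, ?_⟩, ?_, hdens, hBnotI, idx15, hmem⟩
  · intro A B hA hB
    simp only [Set.mem_setOf_eq, Set.union_inter_distrib_right] at *
    exact hA.union hB
  · intro A B hAB hB
    exact hB.subset (Set.inter_subset_inter_left _ hAB)
  · intro A hA
    exact hA.subset Set.inter_subset_left
  · intro h
    simp only [Set.mem_setOf_eq, Set.univ_inter] at h
    exact evens_inf h
  · intro W
    exact W _ _ ⟨1, one_ne_zero, hdens⟩ hBnotI hmem
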